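/- arXiv:1601.01008 — 2 statements merged into one kernel-verified Lean document; each statement's English description precedes it below -/
import Mathlib

section
/- Let G be the simple graph on ℤ × ℤ in which two points u and v are adjacent if and only if u - v ∈ {(1,0), (-1,0), (0,1), (0,-1), (1,-1), (-1,1)}. For every integer i ≥ 1, the subgraph of G induced on the set of vertices at graph distance exactly i from the origin (0,0) is isomorphic to the cycle graph on 6i vertices. -/
/-- The infinite regular triangular grid graph on `ℤ × ℤ`: two points `u, v` are adjacent
iff `u - v ∈ {(1,0), (-1,0), (0,1), (0,-1), (1,-1), (-1,1)}`. -/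
def triGrid : SimpleGraph (ℤ × ℤ) where
  Adj u v := u - v ∈
    ({(1, 0), (-1, 0), (0, 1), (0, -1), (1, -1), (-1, 1)} : Set (ℤ × ℤ))
  symm := by
    constructor
    intro u v h
    rw [show v - u = -(u - v) from (neg_sub u v).symm]
    simp only [Set.mem_insert_iff, Set.mem_singleton_iff] at h ⊢
    rcases h with h | h | h | h | h | h <;> rw [h] <;> simp [Prod.ext_iff]
  loopless := by
    constructor
    intro u h
    simp only [sub_self, Set.mem_insert_iff, Set.mem_singleton_iff, Prod.ext_iff] at h
    simp_all


lemma triGrid_adj {u v : ℤ × ℤ} : triGrid.Adj u v ↔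
    (u.1 - v.1 = 1 ∧ u.2 - v.2 = 0) ∨ (u.1 - v.1 = -1 ∧ u.2 - v.2 = 0) ∨
    (u.1 - v.1 = 0 ∧ u.2 - v.2 = 1) ∨ (u.1 - v.1 = 0 ∧ u.2 - v.2 = -1) ∨
    (u.1 - v.1 = 1 ∧ u.2 - v.2 = -1) ∨ (u.1 - v.1 = -1 ∧ u.2 - v.2 = 1) := by
  show u - v ∈ _ ↔ _
  simp [Set.mem_insert_iff, Prod.ext_iff]

def hexDist (v : ℤ × ℤ) : ℕ := max v.1.natAbs (max v.2.natAbs (v.1 + v.2).natAbs)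

set_option maxHeartbeats 1000000 in
lemma hexDist_le_of_adj {u v : ℤ × ℤ} (h : triGrid.Adj u v) :
    hexDist v ≤ hexDist u + 1 := by
  rw [triGrid_adj] at h
  unfold hexDist
  rcases h with ⟨h1, h2⟩ | ⟨h1, h2⟩ | ⟨h1, h2⟩ | ⟨h1, h2⟩ | ⟨h1, h2⟩ | ⟨h1, h2⟩ <;> omega

lemma hexDist_le_length {u v : ℤ × ℤ} (w : triGrid.Walk u v) :
    hexDist v ≤ hexDist u + w.length := by
  induction w with
  | nil => simp
  | cons h p ih =>
    rename_i a b c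
    have := hexDist_le_of_adj h
    simp only [SimpleGraph.Walk.length_cons]
    omega

lemma exists_walk (n : ℕ) : ∀ v : ℤ × ℤ, hexDist v = n →
    ∃ w : triGrid.Walk ((0,0) : ℤ × ℤ) v, w.length = n := by
  induction n with
  | zero =>
    intro v hv
    have : v = (0, 0) := by
      obtain ⟨x, y⟩ := v
      simp only [hexDist] at hv
      simp only [Prod.ext_iff]
      omega
    subst this
    exact ⟨SimpleGraph.Walk.nil, rfl⟩
  | succ n ih =>
    intro v hv
    obtain ⟨x, y⟩ := v
    -- pick a neighbor u closer to origin
    have hne : ¬(x = 0 ∧ y = 0) := by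
      intro ⟨h1, h2⟩; subst h1; subst h2; simp [hexDist] at hv
    -- choose step
    obtain ⟨u, hadj, hu⟩ :
        ∃ u : ℤ × ℤ, triGrid.Adj u (x, y) ∧ hexDist u = n := by
      by_cases h1 : 1 ≤ x ∧ 1 ≤ -y
      · refine ⟨(x - 1, y + 1), ?_, ?_⟩
        · rw [triGrid_adj]; try dsimp only; omega
        · simp only [hexDist] at hv ⊢; omega
      by_cases h2 : x ≤ -1 ∧ 1 ≤ y
      · refine ⟨(x + 1, y - 1), ?_, ?_⟩
        · rw [triGrid_adj]; try dsimp only; omega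
        · simp only [hexDist] at hv ⊢; omega
      by_cases h3 : 1 ≤ x
      · refine ⟨(x - 1, y), ?_, ?_⟩
        · rw [triGrid_adj]; try dsimp only; omega
        · simp only [hexDist] at hv ⊢; omega
      by_cases h4 : x ≤ -1
      · refine ⟨(x + 1, y), ?_, ?_⟩
        · rw [triGrid_adj]; try dsimp only; omega
        · simp only [hexDist] at hv ⊢; omega
      by_cases h5 : 1 ≤ y
      · refine ⟨(x, y - 1), ?_, ?_⟩
        · rw [triGrid_adj]; try dsimp only; omega
        · simp only [hexDist] at hv ⊢; omega
      · refine ⟨(x, y + 1), ?_, ?_⟩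
        · rw [triGrid_adj]; try dsimp only; omega
        · simp only [hexDist] at hv ⊢; omega
    obtain ⟨w, hw⟩ := ih u hu
    exact ⟨w.concat hadj, by simp [hw]⟩

lemma triGrid_dist_eq (v : ℤ × ℤ) : triGrid.dist (0, 0) v = hexDist v := by
  obtain ⟨w, hw⟩ := exists_walk (hexDist v) v rfl
  apply le_antisymm
  · rw [← hw]; exact SimpleGraph.dist_le w
  · have hr : triGrid.Reachable ((0,0) : ℤ × ℤ) v := ⟨w⟩
    obtain ⟨w', hw'⟩ := hr.exists_walk_length_eq_dist
    have := hexDist_le_length w'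
    have h0 : hexDist (0, 0) = 0 := rfl
    omega

def hexF (i k : ℕ) : ℤ × ℤ :=
  if k < i then ((i : ℤ) - k, k)
  else if k < 2*i then ((i : ℤ) - k, i)
  else if k < 3*i then (-(i:ℤ), 3*(i:ℤ) - k)
  else if k < 4*i then ((k:ℤ) - 4*i, 3*(i:ℤ) - k)
  else if k < 5*i then ((k:ℤ) - 4*i, -(i:ℤ))
  else ((i:ℤ), (k:ℤ) - 6*i)

lemma hexF_hexDist {i k : ℕ} (hi : 1 ≤ i) (hk : k < 6*i) : hexDist (hexF i k) = i := by
  unfold hexF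
  split_ifs <;> simp only [hexDist] <;> (try dsimp only) <;> omega

lemma hexF_inj {i a b : ℕ} (ha : a < 6*i) (hb : b < 6*i) (h : hexF i a = hexF i b) :
    a = b := by
  unfold hexF at h
  split_ifs at h <;> rw [Prod.ext_iff] at h <;> (try dsimp only at h) <;> omega

lemma hexF_surj {i : ℕ} (hi : 1 ≤ i) (v : ℤ × ℤ) (hv : hexDist v = i) :
    ∃ k : ℕ, k < 6*i ∧ hexF i k = v := by
  obtain ⟨x, y⟩ := v
  simp only [hexDist] at hv
  try dsimp only at hv
  by_cases c1 : 1 ≤ x ∧ 0 ≤ y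
  · exact ⟨y.toNat, by omega, by unfold hexF; split_ifs <;>
      simp only [Prod.ext_iff] <;> (try dsimp only) <;> omega⟩
  by_cases c2 : x ≤ 0 ∧ 1 ≤ x + y
  · exact ⟨((i:ℤ) - x).toNat, by omega, by unfold hexF; split_ifs <;>
      simp only [Prod.ext_iff] <;> (try dsimp only) <;> omega⟩
  by_cases c3 : 1 ≤ y
  · exact ⟨(3*(i:ℤ) - y).toNat, by omega, by unfold hexF; split_ifs <;>
      simp only [Prod.ext_iff] <;> (try dsimp only) <;> omega⟩
  by_cases c4 : x ≤ -1
  · exact ⟨(x + 4*(i:ℤ)).toNat, by omega, by unfold hexF; split_ifs <;>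
      simp only [Prod.ext_iff] <;> (try dsimp only) <;> omega⟩
  by_cases c5 : x + y ≤ -1
  · exact ⟨(x + 4*(i:ℤ)).toNat, by omega, by unfold hexF; split_ifs <;>
      simp only [Prod.ext_iff] <;> (try dsimp only) <;> omega⟩
  · exact ⟨(y + 6*(i:ℤ)).toNat, by omega, by unfold hexF; split_ifs <;>
      simp only [Prod.ext_iff] <;> (try dsimp only) <;> omega⟩

lemma hexF_adj {i a b : ℕ} (hi : 1 ≤ i) (ha : a < 6*i) (hb : b < 6*i) :
    triGrid.Adj (hexF i a) (hexF i b) ↔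
      (b = a + 1 ∨ a = b + 1 ∨ (a = 0 ∧ b + 1 = 6*i) ∨ (b = 0 ∧ a + 1 = 6*i)) := by
  rw [triGrid_adj]
  unfold hexF
  split_ifs <;> (try dsimp only) <;> omega

lemma mod_cases' {x m : ℕ} (hx : x < 2*m) :
    x % m = if x < m then x else x - m := by
  split_ifs with h
  · exact Nat.mod_eq_of_lt h
  · rw [Nat.mod_eq_sub_mod (by omega), Nat.mod_eq_of_lt (by omega)]

/-- For every integer `i ≥ 1`, the subgraph of the triangular grid
graph induced on the set of vertices at graph distance exactly `i` from the origin is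
isomorphic to the cycle graph on `6i` vertices. -/
theorem triGrid_sphere_isCycle (i : ℕ) (hi : 1 ≤ i) :
    Nonempty
      ((triGrid.induce {v : ℤ × ℤ | triGrid.dist (0, 0) v = i}) ≃g
        SimpleGraph.cycleGraph (6 * i)) := by
  have hset : {v : ℤ × ℤ | triGrid.dist (0, 0) v = i} = {v : ℤ × ℤ | hexDist v = i} := by
    ext v; rw [Set.mem_setOf_eq, Set.mem_setOf_eq, triGrid_dist_eq]
  rw [hset]
  let f : Fin (6 * i) → {v : ℤ × ℤ | hexDist v = i} :=
    fun k => ⟨hexF i k.val, hexF_hexDist hi k.isLt⟩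
  have hbij : Function.Bijective f := by
    constructor
    · intro a b h
      exact Fin.ext (hexF_inj a.isLt b.isLt (congrArg Subtype.val h))
    · rintro ⟨v, hv⟩
      obtain ⟨k, hk, hfk⟩ := hexF_surj hi v hv
      exact ⟨⟨k, hk⟩, Subtype.ext hfk⟩
  refine ⟨SimpleGraph.Iso.symm ⟨Equiv.ofBijective f hbij, ?_⟩⟩
  intro a b
  show (triGrid.induce _).Adj (f a) (f b) ↔ (SimpleGraph.cycleGraph (6*i)).Adj a b
  have h1 : (triGrid.induce {v : ℤ × ℤ | hexDist v = i}).Adj (f a) (f b) ↔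
      triGrid.Adj (hexF i a.val) (hexF i b.val) := by
    simp [SimpleGraph.comap_adj, f]
  rw [h1, hexF_adj hi a.isLt b.isLt, SimpleGraph.cycleGraph_adj']
  simp only [Fin.sub_def]
  have ha := a.isLt; have hb := b.isLt
  rw [mod_cases' (by omega), mod_cases' (by omega)]
  split_ifs <;> omega
end

section
/- Let α be a finite type and let f : α → Option α be a partial function. Let G be the simple graph on α in which distinct vertices a and b are adjacent if and only if f a = some b or f b = some a. Then any two cycles of G whose base vertices lie in the same connected component of G have the same edge set; that is, each connected component of G contains at most one cycle. -/
/-- The simple graph on `α` associated with a partial function `f : α → Option α`: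
distinct vertices `a` and `b` are adjacent iff `f a = some b` or `f b = some a`. -/
def partialFunGraph {α : Type*} (f : α → Option α) : SimpleGraph α where
  Adj a b := a ≠ b ∧ (f a = some b ∨ f b = some a)
  symm := by
    constructor
    intro a b ⟨hne, hor⟩
    exact ⟨hne.symm, hor.symm⟩
  loopless := by
    constructor
    intro a h
    exact h.1 rfl

namespace PartialFunGraphAux

open SimpleGraph

section GeneralGraph

variable {V : Type*} {G : SimpleGraph V}

/-- In a path, the start vertex has at most one neighbor along the path. -/
lemma endE {a b : V} {p : G.Walk a b} (hp : p.IsPath) {z z' : V}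
    (h1 : s(a, z) ∈ p.edges) (h2 : s(a, z') ∈ p.edges) : z = z' := by
  cases p with
  | nil => simp at h1
  | cons hadj q =>
    rename_i m
    rw [SimpleGraph.Walk.cons_isPath_iff] at hp
    rw [SimpleGraph.Walk.edges_cons, List.mem_cons] at h1 h2
    have hmem : ∀ w : V, s(a, w) = s(a, m) ∨ s(a, w) ∈ q.edges → w = m := by
      rintro w (hw | hw)
      · rw [Sym2.eq_iff] at hw
        rcases hw with ⟨-, rfl⟩ | ⟨ham, rfl⟩
        · rfl
        · exact absurd ham hadj.ne
      · exact absurd (q.fst_mem_support_of_mem_edges hw) hp.2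
    exact (hmem z h1).trans (hmem z' h2).symm

/-- In a path, every vertex has at most two neighbors along the path. -/
lemma pathDeg : ∀ {a b : V} (p : G.Walk a b), p.IsPath →
    ∀ {y z1 z2 z3 : V}, s(y, z1) ∈ p.edges → s(y, z2) ∈ p.edges → s(y, z3) ∈ p.edges →
    z1 = z2 ∨ z1 = z3 ∨ z2 = z3 := by
  intro a b p
  induction p with
  | nil => intro _ _ _ _ _ h1 _ _; simp at h1
  | cons hadj q ih =>
    rename_i a m b
    intro hp y z1 z2 z3 h1 h2 h3
    rw [SimpleGraph.Walk.cons_isPath_iff] at hp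
    rw [SimpleGraph.Walk.edges_cons, List.mem_cons] at h1 h2 h3
    have hhd : ∀ w : V, s(y, w) = s(a, m) → (y = a ∧ w = m) ∨ (y = m ∧ w = a) := by
      intro w hw; rwa [Sym2.eq_iff] at hw
    have hdd : ∀ w w' : V, s(y, w) = s(a, m) → s(y, w') = s(a, m) → w = w' := by
      intro w w' hw hw'
      rcases hhd w hw with ⟨hy, hw1⟩ | ⟨hy, hw1⟩ <;>
        rcases hhd w' hw' with ⟨hy', hw1'⟩ | ⟨hy', hw1'⟩
      · rw [hw1, hw1']
      · exfalso; exact hadj.ne (by rw [← hy, hy'])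
      · exfalso; exact hadj.ne (by rw [← hy', hy])
      · rw [hw1, hw1']
    have hq1 : ∀ w w' : V, s(y, w) ∈ q.edges → s(y, w') ∈ q.edges → (y = a ∨ y = m) → w = w' := by
      intro w w' hw hw' hy
      rcases hy with rfl | rfl
      · exact absurd (q.fst_mem_support_of_mem_edges hw) hp.2
      · exact endE hp.1 hw hw'
    rcases h1 with h1 | h1 <;> rcases h2 with h2 | h2 <;> rcases h3 with h3 | h3
    · exact Or.inl (hdd _ _ h1 h2)
    · exact Or.inl (hdd _ _ h1 h2)
    · exact Or.inr (Or.inl (hdd _ _ h1 h3))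
    · exact Or.inr (Or.inr (hq1 _ _ h2 h3 ((hhd _ h1).imp And.left And.left)))
    · exact Or.inr (Or.inr (hdd _ _ h2 h3))
    · exact Or.inr (Or.inl (hq1 _ _ h1 h3 ((hhd _ h2).imp And.left And.left)))
    · exact Or.inl (hq1 _ _ h1 h2 ((hhd _ h3).imp And.left And.left))
    · exact ih hp.1 h1 h2 h3

/-- In a cycle, every vertex has at most two neighbors along the cycle. -/
lemma cycleDeg {u : V} {c : G.Walk u u} (hc : c.IsCycle)
    {y z1 z2 z3 : V} (h1 : s(y, z1) ∈ c.edges) (h2 : s(y, z2) ∈ c.edges)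
    (h3 : s(y, z3) ∈ c.edges) : z1 = z2 ∨ z1 = z3 ∨ z2 = z3 := by
  cases c with
  | nil => simp at h1
  | cons hadj q =>
    rename_i m
    rw [SimpleGraph.Walk.cons_isCycle_iff] at hc
    rw [SimpleGraph.Walk.edges_cons, List.mem_cons] at h1 h2 h3
    have hhd : ∀ w : V, s(y, w) = s(u, m) → (y = u ∧ w = m) ∨ (y = m ∧ w = u) := by
      intro w hw; rwa [Sym2.eq_iff] at hw
    have hdd : ∀ w w' : V, s(y, w) = s(u, m) → s(y, w') = s(u, m) → w = w' := by
      intro w w' hw hw'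
      rcases hhd w hw with ⟨hy, hw1⟩ | ⟨hy, hw1⟩ <;>
        rcases hhd w' hw' with ⟨hy', hw1'⟩ | ⟨hy', hw1'⟩
      · rw [hw1, hw1']
      · exfalso; exact hadj.ne (by rw [← hy, hy'])
      · exfalso; exact hadj.ne (by rw [← hy', hy])
      · rw [hw1, hw1']
    have hq1 : ∀ w w' : V, s(y, w) ∈ q.edges → s(y, w') ∈ q.edges → (y = u ∨ y = m) → w = w' := by
      intro w w' hw hw' hy
      rcases hy with rfl | rfl
      · have hw2 : s(y, w) ∈ q.reverse.edges := by
          rw [SimpleGraph.Walk.edges_reverse, List.mem_reverse]; exact hw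
        have hw2' : s(y, w') ∈ q.reverse.edges := by
          rw [SimpleGraph.Walk.edges_reverse, List.mem_reverse]; exact hw'
        exact endE hc.1.reverse hw2 hw2'
      · exact endE hc.1 hw hw'
    rcases h1 with h1 | h1 <;> rcases h2 with h2 | h2 <;> rcases h3 with h3 | h3
    · exact Or.inl (hdd _ _ h1 h2)
    · exact Or.inl (hdd _ _ h1 h2)
    · exact Or.inr (Or.inl (hdd _ _ h1 h3))
    · exact Or.inr (Or.inr (hq1 _ _ h2 h3 ((hhd _ h1).imp And.left And.left)))
    · exact Or.inr (Or.inr (hdd _ _ h2 h3))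
    · exact Or.inr (Or.inl (hq1 _ _ h1 h3 ((hhd _ h2).imp And.left And.left)))
    · exact Or.inl (hq1 _ _ h1 h2 ((hhd _ h3).imp And.left And.left))
    · exact pathDeg q hc.1 h1 h2 h3

/-- For a nontrivial closed walk, every support vertex is in the tail of the support. -/
lemma tailMem {u : V} {c : G.Walk u u} (hne : c ≠ SimpleGraph.Walk.nil) {z : V}
    (hz : z ∈ c.support) : z ∈ c.support.tail := by
  cases c with
  | nil => exact absurd rfl hne
  | cons hadj q =>
    rw [SimpleGraph.Walk.support_cons] at hz ⊢
    rw [List.tail_cons]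
    rcases List.mem_cons.mp hz with rfl | h
    · exact q.end_mem_support
    · exact h

end GeneralGraph

section PF

variable {α : Type*} (f : α → Option α)

lemma edge_mem_form {u v : α} {p : (partialFunGraph f).Walk u v} {e : Sym2 α}
    (he : e ∈ p.edges) :
    ∃ x y, e = s(x, y) ∧ f x = some y ∧ x ∈ p.support ∧ y ∈ p.support := by
  have hes : e ∈ (partialFunGraph f).edgeSet := p.edges_subset_edgeSet he
  induction e using Sym2.ind with
  | _ a b =>
    have hadj : (partialFunGraph f).Adj a b := hes
    rcases hadj.2 with h | h
    · exact ⟨a, b, rfl, h, p.fst_mem_support_of_mem_edges he,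
        p.snd_mem_support_of_mem_edges he⟩
    · exact ⟨b, a, Sym2.eq_swap, h, p.snd_mem_support_of_mem_edges he,
        p.fst_mem_support_of_mem_edges he⟩

/-- The key structural fact: on a cycle, every vertex has its `f`-successor along
the cycle, and the map sending a vertex to its out-edge is injective. -/
lemma key {u : α} {c : (partialFunGraph f).Walk u u} (hc : c.IsCycle) :
    (∀ x ∈ c.support, ∃ y, f x = some y ∧ s(x, y) ∈ c.edges) ∧
    (∀ x y x' y', x ∈ c.support → x' ∈ c.support → f x = some y → f x' = some y' →
      s(x, y) = s(x', y') → x = x') := by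
  classical
  set s : Finset (Sym2 α) := c.edges.toFinset with hs
  set t : Finset α := c.support.toFinset with ht
  have hP : ∀ e ∈ s, ∃ q : α × α, e = s(q.1, q.2) ∧ f q.1 = some q.2 := by
    intro e he
    obtain ⟨x, y, rfl, hf, -, -⟩ := edge_mem_form f (List.mem_toFinset.mp he)
    exact ⟨(x, y), rfl, hf⟩
  let F : ∀ e ∈ s, α := fun e he => (hP e he).choose.1
  have hspec : ∀ e he, e = s(F e he, (hP e he).choose.2) ∧
      f (F e he) = some (hP e he).choose.2 := fun e he => (hP e he).choose_spec
  have hFt : ∀ e he, F e he ∈ t := by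
    intro e he
    have he' : e ∈ c.edges := List.mem_toFinset.mp he
    rw [(hspec e he).1] at he'
    exact List.mem_toFinset.mpr (c.fst_mem_support_of_mem_edges he')
  have hFinj : ∀ e e' (he : e ∈ s) (he' : e' ∈ s), F e he = F e' he' → e = e' := by
    intro e e' he he' hxy
    obtain ⟨h1, h2⟩ := hspec e he
    obtain ⟨h1', h2'⟩ := hspec e' he'
    rw [hxy, h2'] at h2
    rw [h1, h1', hxy, Option.some_inj.mp h2]
  have hcards : s.card = c.length := by
    rw [hs, List.toFinset_card_of_nodup hc.edges_nodup, SimpleGraph.Walk.length_edges]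
  have hu_tail : u ∈ c.support.tail := tailMem hc.ne_nil c.start_mem_support
  have htcard : t.card ≤ s.card := by
    have hsupp : c.support = u :: c.support.tail := c.support_eq_cons
    have h1 : t = c.support.tail.toFinset := by
      rw [ht]
      conv_lhs => rw [hsupp]
      rw [List.toFinset_cons, Finset.insert_eq_self]
      exact List.mem_toFinset.mpr hu_tail
    have h2 : c.support.tail.length = c.length := by
      have h3 := c.length_support
      rw [hsupp] at h3
      simpa using h3.symm
    calc t.card ≤ c.support.tail.length := h1 ▸ List.toFinset_card_le _
    _ = c.length := h2
    _ = s.card := hcards.symm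
  have hsurj := Finset.surj_on_of_inj_on_of_card_le F hFt hFinj htcard
  constructor
  · intro x hx
    obtain ⟨e, he, hxe⟩ := hsurj x (List.mem_toFinset.mpr hx)
    obtain ⟨h1, h2⟩ := hspec e he
    refine ⟨(hP e he).choose.2, ?_, ?_⟩
    · rw [hxe]; exact h2
    · rw [hxe, ← h1]; exact List.mem_toFinset.mp he
  · intro x y x' y' hx hx' hfx hfx' heq
    rw [Sym2.eq_iff] at heq
    rcases heq with ⟨h, -⟩ | ⟨hxy', hyx'⟩
    · exact h
    · have hfx1 : f x = some x' := by rw [hfx, hyx']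
      have hfx2 : f x' = some x := by rw [hfx', ← hxy']
      obtain ⟨e, he, hxe⟩ := hsurj x (List.mem_toFinset.mpr hx)
      obtain ⟨e', he', hxe'⟩ := hsurj x' (List.mem_toFinset.mpr hx')
      obtain ⟨h1, h2⟩ := hspec e he
      obtain ⟨h1', h2'⟩ := hspec e' he'
      rw [← hxe] at h2
      rw [← hxe'] at h2'
      rw [hfx1] at h2
      rw [hfx2] at h2'
      have he'' : e = e' := by
        rw [h1, h1', ← hxe, ← hxe', ← Option.some_inj.mp h2, ← Option.some_inj.mp h2']
        exact Sym2.eq_swap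
      subst he''
      rw [hxe, hxe']

/-- `f` is injective on the support of a cycle. -/
lemma f_injOn {u : α} {c : (partialFunGraph f).Walk u u} (hc : c.IsCycle)
    {x x' y : α} (hx : x ∈ c.support) (hx' : x' ∈ c.support)
    (hfx : f x = some y) (hfx' : f x' = some y) : x = x' := by
  by_contra hne
  obtain ⟨keyA, keyU⟩ := key f hc
  have he1 : s(x, y) ∈ c.edges := by
    obtain ⟨y0, h0, h1⟩ := keyA x hx
    rwa [Option.some_inj.mp (h0.symm.trans hfx)] at h1
  have he2 : s(x', y) ∈ c.edges := by
    obtain ⟨y0, h0, h1⟩ := keyA x' hx'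
    rwa [Option.some_inj.mp (h0.symm.trans hfx')] at h1
  have hy : y ∈ c.support := c.snd_mem_support_of_mem_edges he1
  obtain ⟨z, hfz, hez⟩ := keyA y hy
  have he1' : s(y, x) ∈ c.edges := by rw [Sym2.eq_swap]; exact he1
  have he2' : s(y, x') ∈ c.edges := by rw [Sym2.eq_swap]; exact he2
  rcases cycleDeg hc he1' he2' hez with h | h | h
  · exact hne h
  · subst h
    have hxy : x = y := keyU x y y x hx hy hfx hfz Sym2.eq_swap
    exact (c.adj_of_mem_edges he1).ne hxy
  · subst h
    have hxy : x' = y := keyU x' y y x' hx' hy hfx' hfz Sym2.eq_swap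
    exact (c.adj_of_mem_edges he2).ne hxy

/-- The support of a cycle is closed under the `f`-step relation. -/
lemma closure {u : α} {c : (partialFunGraph f).Walk u u} (hc : c.IsCycle)
    {x y : α} (hx : x ∈ c.support)
    (h : Relation.ReflTransGen (fun a b => f a = some b) x y) : y ∈ c.support := by
  induction h with
  | refl => exact hx
  | tail h1 h2 ih =>
    obtain ⟨y0, hy0, he⟩ := (key f hc).1 _ ih
    have : y0 = _ := Option.some_inj.mp (hy0.symm.trans h2)
    subst this
    exact c.snd_mem_support_of_mem_edges he

/-- Any vertex reachable from the base of a cycle has an `f`-orbit meeting the cycle. -/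
lemma meet {u v : α} {c : (partialFunGraph f).Walk u u} (hc : c.IsCycle)
    (h : (partialFunGraph f).Reachable u v) :
    ∃ z ∈ c.support, Relation.ReflTransGen (fun a b => f a = some b) v z := by
  obtain ⟨w⟩ := h
  have main : ∀ {a bb : α} (_ : (partialFunGraph f).Walk a bb),
      (∃ z ∈ c.support, Relation.ReflTransGen (fun a b => f a = some b) a z) →
      ∃ z ∈ c.support, Relation.ReflTransGen (fun a b => f a = some b) bb z := by
    intro a bb w
    induction w with
    | nil => exact id
    | cons hadj q ih =>
      rename_i a m bb
      rintro ⟨z, hz, hrz⟩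
      apply ih
      rcases hadj.2 with hfa | hfm
      · rcases Relation.ReflTransGen.cases_head hrz with rfl | ⟨b', hb', hrest⟩
        · obtain ⟨y0, hy0, he⟩ := (key f hc).1 a hz
          have hym : y0 = m := Option.some_inj.mp (hy0.symm.trans hfa)
          subst hym
          exact ⟨y0, c.snd_mem_support_of_mem_edges he, Relation.ReflTransGen.refl⟩
        · have hbm : b' = m := Option.some_inj.mp (hb'.symm.trans hfa)
          subst hbm
          exact ⟨z, hz, hrest⟩
      · exact ⟨z, hz, Relation.ReflTransGen.head hfm hrz⟩
  exact main w ⟨u, c.start_mem_support, Relation.ReflTransGen.refl⟩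

/-- On a cycle, the `f`-predecessor of a vertex is reachable from it: every vertex of the
cycle is `f`-periodic. -/
lemma perA [Finite α] {u : α} {c : (partialFunGraph f).Walk u u} (hc : c.IsCycle)
    {a b : α} (ha : a ∈ c.support) (hb : b ∈ c.support) (hfb : f b = some a) :
    Relation.ReflTransGen (fun a b => f a = some b) a b := by
  classical
  have keyA := (key f hc).1
  have hex : ∀ x : {z // z ∈ c.support}, ∃ y : {z // z ∈ c.support}, f x.1 = some y.1 := by
    rintro ⟨x, hx⟩
    obtain ⟨y, hy, he⟩ := keyA x hx
    exact ⟨⟨y, c.snd_mem_support_of_mem_edges he⟩, hy⟩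
  choose g hg using hex
  have hginj : Function.Injective g := by
    intro x x' hxx
    have h1 := hg x
    have h2 := hg x'
    rw [hxx] at h1
    exact Subtype.ext (f_injOn f hc x.2 x'.2 h1 h2)
  obtain ⟨i, j, hij, hgij⟩ :=
    Finite.exists_ne_map_eq_of_infinite (fun n : ℕ => g^[n] ⟨b, hb⟩)
  have hper : ∀ {i j : ℕ}, i < j → g^[i] ⟨b, hb⟩ = g^[j] ⟨b, hb⟩ →
      g^[j - i] ⟨b, hb⟩ = ⟨b, hb⟩ := by
    intro i j hlt heq
    have h1 : g^[i] (g^[j - i] ⟨b, hb⟩) = g^[i] ⟨b, hb⟩ := by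
      rw [← Function.iterate_add_apply, Nat.add_sub_cancel' hlt.le]
      exact heq.symm
    exact hginj.iterate i h1
  obtain ⟨k, hk0, hgk⟩ : ∃ k, 0 < k ∧ g^[k] ⟨b, hb⟩ = ⟨b, hb⟩ := by
    rcases lt_trichotomy i j with h | h | h
    · exact ⟨j - i, Nat.sub_pos_of_lt h, hper h hgij⟩
    · exact absurd h hij
    · exact ⟨i - j, Nat.sub_pos_of_lt h, hper h hgij.symm⟩
  have hchain : ∀ (n : ℕ) (x : {z // z ∈ c.support}),
      Relation.ReflTransGen (fun a b => f a = some b) x.1 (g^[n] x).1 := by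
    intro n
    induction n with
    | zero => intro x; rw [Function.iterate_zero_apply]
    | succ n ihn =>
      intro x
      rw [Function.iterate_succ_apply']
      exact (ihn x).tail (hg _)
  have hba : g ⟨b, hb⟩ = ⟨a, ha⟩ := by
    apply Subtype.ext
    have h1 := hg ⟨b, hb⟩
    exact (Option.some_inj.mp (h1.symm.trans hfb))
  have h1 := hchain (k - 1) (g ⟨b, hb⟩)
  have hk1 : (k - 1).succ = k := Nat.succ_pred_eq_of_pos hk0
  rw [← Function.iterate_succ_apply, hk1, hgk, hba] at h1
  exact h1

/-- The support of a cycle is strongly connected under the `f`-step relation. -/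
lemma strong [Finite α] {u : α} {c : (partialFunGraph f).Walk u u} (hc : c.IsCycle)
    {w x : α} (hw : w ∈ c.support) (hx : x ∈ c.support) :
    Relation.ReflTransGen (fun a b => f a = some b) w x := by
  classical
  by_contra hcon
  set q := c.rotate w hw with hqdef
  have hqc : q.IsCycle := hc.rotate hw
  have hmemq : ∀ z, z ∈ c.support → z ∈ q.support := by
    intro z hz
    have h1 : z ∈ c.support.tail := tailMem hc.ne_nil hz
    have h2 : z ∈ q.support.tail := (SimpleGraph.Walk.support_rotate c w hw).mem_iff.mpr h1
    exact List.mem_of_mem_tail h2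
  have hmemc : ∀ z, z ∈ q.support → z ∈ c.support := by
    intro z hz
    have h1 : z ∈ q.support.tail := tailMem hqc.ne_nil hz
    have h2 : z ∈ c.support.tail := (SimpleGraph.Walk.support_rotate c w hw).mem_iff.mp h1
    exact List.mem_of_mem_tail h2
  have hxq : x ∈ q.support := hmemq x hx
  set p := q.takeUntil x hxq with hpdef
  obtain ⟨d, hd, hdS, hdns⟩ := p.exists_boundary_dart
    {z | Relation.ReflTransGen (fun a b => f a = some b) w z}
    Relation.ReflTransGen.refl hcon
  have hadj : (partialFunGraph f).Adj d.fst d.snd := d.adj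
  have hsnd_p : d.snd ∈ p.support := SimpleGraph.Walk.dart_snd_mem_support_of_mem_darts _ hd
  have hsnd_c : d.snd ∈ c.support := hmemc _ (q.support_takeUntil_subset hxq hsnd_p)
  have hfst_c : d.fst ∈ c.support := closure f hc hw hdS
  rcases hadj.2 with h | h
  · exact hdns (hdS.tail h)
  · exact hdns (hdS.trans (perA f hc hfst_c hsnd_c h))

/-- The edge set of a cycle is determined by `f` and the support of the cycle. -/
lemma edges_desc {u : α} {c : (partialFunGraph f).Walk u u} (hc : c.IsCycle) (e : Sym2 α) :
    e ∈ c.edges ↔ ∃ x y, x ∈ c.support ∧ f x = some y ∧ e = s(x, y) := by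
  constructor
  · intro he
    obtain ⟨x, y, rfl, hf, hx, -⟩ := edge_mem_form f he
    exact ⟨x, y, hx, hf, rfl⟩
  · rintro ⟨x, y, hx, hf, rfl⟩
    obtain ⟨y0, h0, h1⟩ := (key f hc).1 x hx
    rwa [Option.some_inj.mp (h0.symm.trans hf)] at h1


end PF

end PartialFunGraphAux

/-- Let `α` be a finite type and `f : α → Option α` a partial function.
In the simple graph on `α` in which distinct `a` and `b` are adjacent iff `f a = some b`
or `f b = some a`, any two cycles whose base vertices lie in the same connected
component have the same edge set; that is, each connected component contains at most
one cycle. -/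
theorem partialFunGraph_unique_cycle {α : Type*} [Fintype α] (f : α → Option α)
    {u v : α} (c : (partialFunGraph f).Walk u u) (c' : (partialFunGraph f).Walk v v)
    (hc : c.IsCycle) (hc' : c'.IsCycle)
    (huv : (partialFunGraph f).Reachable u v) :
    {e : Sym2 α | e ∈ c.edges} = {e : Sym2 α | e ∈ c'.edges} := by
  classical
  obtain ⟨z, hzc, hzr⟩ := PartialFunGraphAux.meet f hc huv
  have hzc' : z ∈ c'.support :=
    PartialFunGraphAux.closure f hc' c'.start_mem_support hzr
  have hsupp : ∀ x, x ∈ c.support ↔ x ∈ c'.support := by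
    intro x
    constructor
    · intro hx
      exact PartialFunGraphAux.closure f hc' hzc'
        (PartialFunGraphAux.strong f hc hzc hx)
    · intro hx
      exact PartialFunGraphAux.closure f hc hzc
        (PartialFunGraphAux.strong f hc' hzc' hx)
  ext e
  simp only [Set.mem_setOf_eq]
  rw [PartialFunGraphAux.edges_desc f hc e, PartialFunGraphAux.edges_desc f hc' e]
  constructor
  · rintro ⟨x, y, hx, hf, rfl⟩
    exact ⟨x, y, (hsupp x).mp hx, hf, rfl⟩
  · rintro ⟨x, y, hx, hf, rfl⟩
    exact ⟨x, y, (hsupp x).mpr hx, hf, rfl⟩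
end
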